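/- arXiv:2501.06213 — 4 statements merged into one kernel-verified Lean document; each statement's English description precedes it below -/
import Mathlib

section
/- The map π_P, sending a sequence of positive integers (i_k)_{k≥1} to π_P((i_k)) = p̂_{i_1} + ∑_{k=1}^∞ p̂_{i_{k+1}} · p_{i_1} ⋯ p_{i_k}, is a bijection from the set of all sequences of positive integers onto the half-open interval [0,1). -/
open scoped BigOperators
open MeasureTheory

/-- `p̂_j = p_1 + ⋯ + p_{j-1}` (so `p̂_1 = 0`). -/
noncomputable def phat (p : ℕ → ℝ) (j : ℕ) : ℝ := ∑ m ∈ Finset.Ico 1 j, p m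

/-- The expansion `π_P((i_k)) = p̂_{i_1} + ∑_{k≥1} p̂_{i_{k+1}} · p_{i_1} ⋯ p_{i_k}`,
with the digit sequence `i : ℕ → ℕ` indexed from 0 (so `i 0 = i_1`). -/
noncomputable def piP (p : ℕ → ℝ) (i : ℕ → ℕ) : ℝ :=
  phat p (i 0) + ∑' k : ℕ, phat p (i (k + 1)) * ∏ m ∈ Finset.range (k + 1), p (i m)

/-- The value `∑_{k≥1} (−1)^{k−1} 2^{1−(i_1+⋯+i_k)}` of the Minkowski type function
on the point with digit sequence `i` (indexed from 0). -/
noncomputable def Mseq (i : ℕ → ℕ) : ℝ :=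
  ∑' k : ℕ, (-1 : ℝ) ^ k * (2 : ℝ) ^ ((1 : ℤ) - ∑ m ∈ Finset.range (k + 1), (i m : ℤ))

namespace LurothAux

variable {p : ℕ → ℝ}

open Classical in
/-- The greedy digit of `x`. -/
noncomputable def dig (p : ℕ → ℝ) (x : ℝ) : ℕ :=
  if h : ∃ j, x < phat p (j + 2) then Nat.find h + 1 else 1

/-- Iterated remainders. -/
noncomputable def rem (p : ℕ → ℝ) (x : ℝ) : ℕ → ℝ
  | 0 => x
  | k + 1 => (rem p x k - phat p (dig p (rem p x k))) / p (dig p (rem p x k))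

section Basic


lemma hsum (hp : ∀ j, 1 ≤ j → 0 < p j ∧ p j < 1) (hpsum : ∑' j : ℕ, p (j + 1) = 1) : Summable (fun j : ℕ => p (j + 1)) := by
  by_contra h
  rw [tsum_eq_zero_of_not_summable h] at hpsum
  norm_num at hpsum

lemma phat_succ_eq (j : ℕ) : phat p (j + 1) = ∑ m ∈ Finset.range j, p (m + 1) := by
  unfold phat
  rw [Finset.sum_Ico_eq_sum_range]
  simp [add_comm]

lemma phat_succ {j : ℕ} (hj : 1 ≤ j) : phat p (j + 1) = phat p j + p j :=
  Finset.sum_Ico_succ_top hj _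

lemma phat_nonneg (hp : ∀ j, 1 ≤ j → 0 < p j ∧ p j < 1) (j : ℕ) : 0 ≤ phat p j :=
  Finset.sum_nonneg fun m hm => le_of_lt (hp m (Finset.mem_Ico.1 hm).1).1

lemma phat_mono (hp : ∀ j, 1 ≤ j → 0 < p j ∧ p j < 1) {j k : ℕ} (h : j ≤ k) : phat p j ≤ phat p k :=
  Finset.sum_le_sum_of_subset_of_nonneg (Finset.Ico_subset_Ico le_rfl h)
    (fun m hm _ => le_of_lt (hp m (Finset.mem_Ico.1 hm).1).1)

lemma partial_le_one (hp : ∀ j, 1 ≤ j → 0 < p j ∧ p j < 1) (hpsum : ∑' j : ℕ, p (j + 1) = 1) (n : ℕ) : ∑ m ∈ Finset.range n, p (m + 1) ≤ 1 := by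
  rw [← hpsum]
  exact Summable.sum_le_tsum _ (fun m _ => le_of_lt (hp (m + 1) (Nat.le_add_left 1 m)).1)
    (hsum hp hpsum)

lemma phat_succ_le_one (hp : ∀ j, 1 ≤ j → 0 < p j ∧ p j < 1) (hpsum : ∑' j : ℕ, p (j + 1) = 1) (j : ℕ) : phat p (j + 1) ≤ 1 := by
  rw [phat_succ_eq]; exact partial_le_one hp hpsum j

lemma phat_le_one (hp : ∀ j, 1 ≤ j → 0 < p j ∧ p j < 1) (hpsum : ∑' j : ℕ, p (j + 1) = 1) (j : ℕ) : phat p j ≤ 1 := by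
  cases j with
  | zero => simp [phat]
  | succ j => exact phat_succ_le_one hp hpsum j

lemma phat_succ_lt_one (hp : ∀ j, 1 ≤ j → 0 < p j ∧ p j < 1) (hpsum : ∑' j : ℕ, p (j + 1) = 1) (j : ℕ) : phat p (j + 1) < 1 := by
  have h1 : phat p (j + 1) < phat p (j + 2) := by
    rw [phat_succ (Nat.le_add_left 1 j)]
    have := (hp (j + 1) (Nat.le_add_left 1 j)).1
    linarith
  exact lt_of_lt_of_le h1 (phat_succ_le_one hp hpsum (j + 1))

/-- The uniform bound on the digit probabilities. -/
noncomputable def cbd (p : ℕ → ℝ) : ℝ := max (p 1) (1 - p 1)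

lemma cbd_nonneg (hp : ∀ j, 1 ≤ j → 0 < p j ∧ p j < 1) : 0 ≤ cbd p := le_max_of_le_left (le_of_lt (hp 1 le_rfl).1)

lemma cbd_lt_one (hp : ∀ j, 1 ≤ j → 0 < p j ∧ p j < 1) : cbd p < 1 := by
  have h1 := hp 1 le_rfl
  exact max_lt h1.2 (by linarith [h1.1])

lemma p_le_cbd (hp : ∀ j, 1 ≤ j → 0 < p j ∧ p j < 1) (hpsum : ∑' j : ℕ, p (j + 1) = 1) {j : ℕ} (hj : 1 ≤ j) : p j ≤ cbd p := by
  rcases Nat.lt_or_ge j 2 with h2 | h2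
  · interval_cases j
    exact le_max_left _ _
  · refine le_trans ?_ (le_max_right _ _)
    have hne : (0 : ℕ) ≠ j - 1 := by omega
    have hsub : ∑ m ∈ ({0, j - 1} : Finset ℕ), p (m + 1) ≤ 1 := by
      rw [← hpsum]
      exact Summable.sum_le_tsum _ (fun m _ => le_of_lt (hp (m + 1) (Nat.le_add_left 1 m)).1)
        (hsum hp hpsum)
    rw [Finset.sum_pair hne] at hsub
    have hj1 : j - 1 + 1 = j := by omega
    rw [hj1] at hsub
    linarith

variable {i : ℕ → ℕ}

lemma prod_pos (hp : ∀ j, 1 ≤ j → 0 < p j ∧ p j < 1) (hi : ∀ k, 1 ≤ i k) (n : ℕ) : 0 < ∏ m ∈ Finset.range n, p (i m) :=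
  Finset.prod_pos fun m _ => (hp (i m) (hi m)).1

lemma prod_le_pow (hp : ∀ j, 1 ≤ j → 0 < p j ∧ p j < 1) (hpsum : ∑' j : ℕ, p (j + 1) = 1) (hi : ∀ k, 1 ≤ i k) (n : ℕ) :
    ∏ m ∈ Finset.range n, p (i m) ≤ cbd p ^ n := by
  calc ∏ m ∈ Finset.range n, p (i m) ≤ ∏ _m ∈ Finset.range n, cbd p :=
        Finset.prod_le_prod (fun m _ => le_of_lt (hp (i m) (hi m)).1)
          (fun m _ => p_le_cbd hp hpsum (hi m))
    _ = cbd p ^ n := by rw [Finset.prod_const, Finset.card_range]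

lemma summable_master (hp : ∀ j, 1 ≤ j → 0 < p j ∧ p j < 1) (hpsum : ∑' j : ℕ, p (j + 1) = 1) (hi : ∀ k, 1 ≤ i k) (j : ℕ → ℕ) :
    Summable (fun k : ℕ => phat p (j k) * ∏ m ∈ Finset.range k, p (i m)) := by
  apply Summable.of_nonneg_of_le
  · intro k
    exact mul_nonneg (phat_nonneg hp _) (le_of_lt (prod_pos hp hi k))
  · intro k
    calc phat p (j k) * ∏ m ∈ Finset.range k, p (i m)
        ≤ 1 * cbd p ^ k := by
          apply mul_le_mul (phat_le_one hp hpsum _) (prod_le_pow hp hpsum hi k)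
            (le_of_lt (prod_pos hp hi k)) zero_le_one
      _ = cbd p ^ k := one_mul _
  · exact summable_geometric_of_lt_one (cbd_nonneg hp) (cbd_lt_one hp)

lemma summable_piP (hp : ∀ j, 1 ≤ j → 0 < p j ∧ p j < 1) (hpsum : ∑' j : ℕ, p (j + 1) = 1) (hi : ∀ k, 1 ≤ i k) :
    Summable (fun k : ℕ => phat p (i (k + 1)) * ∏ m ∈ Finset.range (k + 1), p (i m)) := by
  have h := summable_master hp hpsum hi i
  exact_mod_cast (summable_nat_add_iff
    (f := fun k : ℕ => phat p (i k) * ∏ m ∈ Finset.range k, p (i m)) 1).2 h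

lemma piP_step (hp : ∀ j, 1 ≤ j → 0 < p j ∧ p j < 1) (hpsum : ∑' j : ℕ, p (j + 1) = 1) (hi : ∀ k, 1 ≤ i k) :
    piP p i = phat p (i 0) + p (i 0) * piP p (fun k => i (k + 1)) := by
  have hshift : ∀ k : ℕ, 1 ≤ i (k + 1) := fun k => hi (k + 1)
  have hg : Summable (fun k : ℕ =>
      phat p (i (k + 1)) * ∏ m ∈ Finset.range k, p (i (m + 1))) :=
    summable_master hp hpsum hshift (fun k => i (k + 1))
  have h1 : ∀ k : ℕ, phat p (i (k + 1)) * ∏ m ∈ Finset.range (k + 1), p (i m)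
      = p (i 0) * (phat p (i (k + 1)) * ∏ m ∈ Finset.range k, p (i (m + 1))) := by
    intro k
    rw [Finset.prod_range_succ']
    ring
  unfold piP
  rw [tsum_congr h1, tsum_mul_left, Summable.tsum_eq_zero_add hg]
  simp only [Finset.range_zero, Finset.prod_empty, mul_one]

lemma piP_ge (hp : ∀ j, 1 ≤ j → 0 < p j ∧ p j < 1) (hi : ∀ k, 1 ≤ i k) : phat p (i 0) ≤ piP p i := by
  unfold piP
  have : 0 ≤ ∑' k : ℕ, phat p (i (k + 1)) * ∏ m ∈ Finset.range (k + 1), p (i m) :=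
    tsum_nonneg fun k => mul_nonneg (phat_nonneg hp _) (le_of_lt (prod_pos hp hi _))
  linarith

lemma piP_le (hp : ∀ j, 1 ≤ j → 0 < p j ∧ p j < 1) (hpsum : ∑' j : ℕ, p (j + 1) = 1) (hi : ∀ k, 1 ≤ i k) : piP p i ≤ phat p (i 0) + p (i 0) := by
  unfold piP
  have key : ∑' k : ℕ, phat p (i (k + 1)) * ∏ m ∈ Finset.range (k + 1), p (i m)
      ≤ p (i 0) := by
    apply Summable.tsum_le_of_sum_range_le (summable_piP hp hpsum hi)
    intro n
    have hstep : ∀ k ∈ Finset.range n,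
        phat p (i (k + 1)) * ∏ m ∈ Finset.range (k + 1), p (i m)
        ≤ (∏ m ∈ Finset.range (k + 1), p (i m)) - ∏ m ∈ Finset.range (k + 2), p (i m) := by
      intro k _
      have hP : 0 < ∏ m ∈ Finset.range (k + 1), p (i m) := prod_pos hp hi _
      have hphat : phat p (i (k + 1)) ≤ 1 - p (i (k + 1)) := by
        have := phat_succ_le_one hp hpsum (i (k + 1))
        rw [phat_succ (hi (k + 1))] at this
        linarith
      have hprod : ∏ m ∈ Finset.range (k + 2), p (i m)
          = (∏ m ∈ Finset.range (k + 1), p (i m)) * p (i (k + 1)) :=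
        Finset.prod_range_succ _ _
      rw [hprod]
      nlinarith
    calc ∑ k ∈ Finset.range n, phat p (i (k + 1)) * ∏ m ∈ Finset.range (k + 1), p (i m)
        ≤ ∑ k ∈ Finset.range n,
            ((∏ m ∈ Finset.range (k + 1), p (i m)) - ∏ m ∈ Finset.range (k + 2), p (i m)) :=
          Finset.sum_le_sum hstep
      _ = (∏ m ∈ Finset.range 1, p (i m)) - ∏ m ∈ Finset.range (n + 1), p (i m) := by
          rw [Finset.sum_range_sub' (fun k => ∏ m ∈ Finset.range (k + 1), p (i m)) n]
      _ ≤ p (i 0) := by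
          have h1 : ∏ m ∈ Finset.range 1, p (i m) = p (i 0) := by simp
          have h2 : 0 < ∏ m ∈ Finset.range (n + 1), p (i m) := prod_pos hp hi _
          linarith
  linarith

lemma piP_lt (hp : ∀ j, 1 ≤ j → 0 < p j ∧ p j < 1) (hpsum : ∑' j : ℕ, p (j + 1) = 1) (hi : ∀ k, 1 ≤ i k) : piP p i < phat p (i 0 + 1) := by
  rw [piP_step hp hpsum hi, phat_succ (hi 0)]
  have hshift : ∀ k : ℕ, 1 ≤ (fun k => i (k + 1)) k := fun k => hi (k + 1)
  have h1 : piP p (fun k => i (k + 1)) < 1 := by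
    have h2 := piP_le hp hpsum hshift
    have h3 : phat p (i 1) + p (i 1) = phat p (i 1 + 1) := (phat_succ (hi 1)).symm
    have h4 : phat p (i 1 + 1) < 1 := by
      have := hi 1
      rcases Nat.exists_eq_add_of_le this with ⟨t, ht⟩
      rw [show i 1 + 1 = (i 1) + 1 from rfl]
      rcases Nat.exists_eq_succ_of_ne_zero (by omega : i 1 ≠ 0) with ⟨s, hs⟩
      exact phat_succ_lt_one hp hpsum (i 1)
    linarith
  have hp0 := (hp (i 0) (hi 0)).1
  nlinarith

lemma piP_lt_one (hp : ∀ j, 1 ≤ j → 0 < p j ∧ p j < 1) (hpsum : ∑' j : ℕ, p (j + 1) = 1) (hi : ∀ k, 1 ≤ i k) : piP p i < 1 :=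
  lt_of_lt_of_le (piP_lt hp hpsum hi) (phat_succ_le_one hp hpsum (i 0))

lemma piP_nonneg (hp : ∀ j, 1 ≤ j → 0 < p j ∧ p j < 1) (hi : ∀ k, 1 ≤ i k) : 0 ≤ piP p i :=
  le_trans (phat_nonneg hp _) (piP_ge hp hi)

lemma piP_iter (hp : ∀ j, 1 ≤ j → 0 < p j ∧ p j < 1) (hpsum : ∑' j : ℕ, p (j + 1) = 1) (hi : ∀ k, 1 ≤ i k) (n : ℕ) :
    piP p i = (∑ k ∈ Finset.range n, phat p (i k) * ∏ m ∈ Finset.range k, p (i m))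
      + (∏ m ∈ Finset.range n, p (i m)) * piP p (fun k => i (k + n)) := by
  induction n with
  | zero => simp
  | succ n ih =>
    have hshift : ∀ k : ℕ, 1 ≤ (fun k => i (k + n)) k := fun k => hi (k + n)
    have hstep := piP_step hp hpsum hshift
    have heq : (fun k => i (k + 1 + n)) = (fun k => i (k + (n + 1))) := by
      funext k; congr 1; omega
    rw [heq] at hstep
    rw [ih, hstep, Finset.sum_range_succ, Finset.prod_range_succ]
    have h0 : (0 : ℕ) + n = n := by omega
    rw [h0]
    ring

end Basic

section Digits

variable {x : ℝ}

lemma dig_exists (hp : ∀ j, 1 ≤ j → 0 < p j ∧ p j < 1) (hpsum : ∑' j : ℕ, p (j + 1) = 1)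
    (hx1 : x < 1) : ∃ j, x < phat p (j + 2) := by
  have ht : Filter.Tendsto (fun n => ∑ m ∈ Finset.range n, p (m + 1))
      Filter.atTop (nhds 1) := by
    have := (hsum hp hpsum).hasSum.tendsto_sum_nat
    rwa [hpsum] at this
  obtain ⟨n, hn⟩ := (ht.eventually (eventually_gt_nhds hx1)).exists
  refine ⟨n, ?_⟩
  calc x < ∑ m ∈ Finset.range n, p (m + 1) := hn
    _ = phat p (n + 1) := (phat_succ_eq n).symm
    _ ≤ phat p (n + 2) := phat_mono hp (by omega)

lemma dig_pos : 1 ≤ dig p x := by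
  unfold dig
  split <;> omega

lemma dig_le (hx0 : 0 ≤ x) (hex : ∃ j, x < phat p (j + 2)) : phat p (dig p x) ≤ x := by
  unfold dig
  rw [dif_pos hex]
  rcases Nat.eq_zero_or_pos (Nat.find hex) with h0 | h0
  · rw [h0]
    simpa [phat] using hx0
  · obtain ⟨m, hm⟩ : ∃ m, Nat.find hex = m + 1 := ⟨Nat.find hex - 1, by omega⟩
    rw [hm]
    have := Nat.find_min hex (by omega : m < Nat.find hex)
    push_neg at this
    convert this using 2

lemma dig_lt (hex : ∃ j, x < phat p (j + 2)) : x < phat p (dig p x + 1) := by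
  unfold dig
  rw [dif_pos hex]
  have := Nat.find_spec hex
  show x < phat p (Nat.find hex + 1 + 1)
  convert this using 2

lemma rem_mem (hp : ∀ j, 1 ≤ j → 0 < p j ∧ p j < 1) (hpsum : ∑' j : ℕ, p (j + 1) = 1)
    (hx : x ∈ Set.Ico (0 : ℝ) 1) (k : ℕ) : rem p x k ∈ Set.Ico (0 : ℝ) 1 := by
  induction k with
  | zero => exact hx
  | succ k ih =>
    obtain ⟨h0, h1⟩ := ih
    have hex := dig_exists hp hpsum h1
    have hd1 : 1 ≤ dig p (rem p x k) := dig_pos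
    have hle := dig_le h0 hex
    have hlt := dig_lt hex
    rw [phat_succ hd1] at hlt
    have hppos := (hp _ hd1).1
    have hrem : rem p x (k + 1)
        = (rem p x k - phat p (dig p (rem p x k))) / p (dig p (rem p x k)) := rfl
    rw [hrem]
    constructor
    · exact div_nonneg (by linarith) (le_of_lt hppos)
    · rw [div_lt_one hppos]
      linarith

lemma rem_rec (hp : ∀ j, 1 ≤ j → 0 < p j ∧ p j < 1) (hpsum : ∑' j : ℕ, p (j + 1) = 1)
    (hx : x ∈ Set.Ico (0 : ℝ) 1) (k : ℕ) :
    rem p x k = phat p (dig p (rem p x k)) + p (dig p (rem p x k)) * rem p x (k + 1) := by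
  have hmem := rem_mem hp hpsum hx k
  have hppos := (hp _ (dig_pos (p := p) (x := rem p x k))).1
  show rem p x k = phat p (dig p (rem p x k))
    + p (dig p (rem p x k)) * ((rem p x k - phat p (dig p (rem p x k))) / p (dig p (rem p x k)))
  field_simp
  ring

lemma x_iter (hp : ∀ j, 1 ≤ j → 0 < p j ∧ p j < 1) (hpsum : ∑' j : ℕ, p (j + 1) = 1)
    (hx : x ∈ Set.Ico (0 : ℝ) 1) (n : ℕ) :
    x = (∑ k ∈ Finset.range n, phat p (dig p (rem p x k))
          * ∏ m ∈ Finset.range k, p (dig p (rem p x m)))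
      + (∏ m ∈ Finset.range n, p (dig p (rem p x m))) * rem p x n := by
  induction n with
  | zero => simp [rem]
  | succ n ih =>
    calc x = (∑ k ∈ Finset.range n, phat p (dig p (rem p x k))
            * ∏ m ∈ Finset.range k, p (dig p (rem p x m)))
          + (∏ m ∈ Finset.range n, p (dig p (rem p x m))) * rem p x n := ih
      _ = (∑ k ∈ Finset.range n, phat p (dig p (rem p x k))
            * ∏ m ∈ Finset.range k, p (dig p (rem p x m)))
          + (∏ m ∈ Finset.range n, p (dig p (rem p x m)))
            * (phat p (dig p (rem p x n)) + p (dig p (rem p x n)) * rem p x (n + 1)) := by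
            rw [← rem_rec hp hpsum hx n]
      _ = _ := by
            rw [Finset.sum_range_succ, Finset.prod_range_succ]
            ring

end Digits

end LurothAux

open LurothAux in
/-- The map `π_P` is a bijection from the set of sequences of positive integers
onto `[0, 1)`. -/
theorem stmt1 (p : ℕ → ℝ) (hp : ∀ j, 1 ≤ j → 0 < p j ∧ p j < 1)
    (hpsum : ∑' j : ℕ, p (j + 1) = 1) :
    Set.BijOn (piP p) {i : ℕ → ℕ | ∀ k, 1 ≤ i k} (Set.Ico (0 : ℝ) 1) := by
  refine ⟨?_, ?_, ?_⟩
  · -- MapsTo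
    intro i hi
    exact ⟨piP_nonneg hp hi, piP_lt_one hp hpsum hi⟩
  · -- InjOn
    intro i hi i' hi' heq
    simp only [Set.mem_setOf_eq] at hi hi'
    by_contra hne
    have hex : ∃ n, i n ≠ i' n := by
      by_contra h
      push_neg at h
      exact hne (funext h)
    have hagree : ∀ m, m < Nat.find hex → i m = i' m :=
      fun m hm => not_not.1 (Nat.find_min hex hm)
    set n := Nat.find hex with hn
    have hne' : i n ≠ i' n := Nat.find_spec hex
    have hSeq : ∑ k ∈ Finset.range n, phat p (i k) * ∏ m ∈ Finset.range k, p (i m)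
        = ∑ k ∈ Finset.range n, phat p (i' k) * ∏ m ∈ Finset.range k, p (i' m) := by
      refine Finset.sum_congr rfl fun k hk => ?_
      rw [Finset.mem_range] at hk
      rw [hagree k hk]
      congr 1
      refine Finset.prod_congr rfl fun m hm => ?_
      rw [Finset.mem_range] at hm
      rw [hagree m (hm.trans hk)]
    have hPeq : ∏ m ∈ Finset.range n, p (i m) = ∏ m ∈ Finset.range n, p (i' m) :=
      Finset.prod_congr rfl fun m hm => by rw [hagree m (Finset.mem_range.1 hm)]
    have h1 := piP_iter hp hpsum hi n
    have h2 := piP_iter hp hpsum hi' n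
    rw [heq, h2, hSeq, hPeq] at h1
    have hPpos : 0 < ∏ m ∈ Finset.range n, p (i' m) := prod_pos hp hi' n
    have hA : piP p (fun k => i (k + n)) = piP p (fun k => i' (k + n)) := by
      have := add_left_cancel h1
      exact mul_left_cancel₀ (ne_of_gt hPpos) this.symm
    have hshift : ∀ k : ℕ, 1 ≤ i (k + n) := fun k => hi _
    have hshift' : ∀ k : ℕ, 1 ≤ i' (k + n) := fun k => hi' _
    have hub := piP_lt hp hpsum hshift
    have hlb := piP_ge hp hshift
    have hub' := piP_lt hp hpsum hshift'
    have hlb' := piP_ge hp hshift'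
    simp only [Nat.zero_add] at hub hlb hub' hlb'
    rcases lt_trichotomy (i n) (i' n) with hlt | heqn | hgt
    · have hm : phat p (i n + 1) ≤ phat p (i' n) := phat_mono hp (by omega)
      rw [hA] at hub
      linarith
    · exact hne' heqn
    · have hm : phat p (i' n + 1) ≤ phat p (i n) := phat_mono hp (by omega)
      rw [hA] at hlb
      linarith
  · -- SurjOn
    intro x hx
    set i : ℕ → ℕ := fun k => dig p (rem p x k) with hidef
    have hi : ∀ k, 1 ≤ i k := fun k => dig_pos
    refine ⟨i, hi, ?_⟩
    have key : ∀ n : ℕ, |piP p i - x| ≤ cbd p ^ n := by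
      intro n
      have h1 := piP_iter hp hpsum hi n
      have h2 := x_iter hp hpsum hx n
      have hsame : (∑ k ∈ Finset.range n, phat p (dig p (rem p x k))
              * ∏ m ∈ Finset.range k, p (dig p (rem p x m)))
          = ∑ k ∈ Finset.range n, phat p (i k) * ∏ m ∈ Finset.range k, p (i m) := rfl
      have hsameP : (∏ m ∈ Finset.range n, p (dig p (rem p x m)))
          = ∏ m ∈ Finset.range n, p (i m) := rfl
      rw [hsame, hsameP] at h2
      have hdiff : piP p i - x = (∏ m ∈ Finset.range n, p (i m))
          * (piP p (fun k => i (k + n)) - rem p x n) := by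
        linear_combination h1 - h2
      have hshift : ∀ k : ℕ, 1 ≤ i (k + n) := fun k => hi _
      have hAmem1 : 0 ≤ piP p (fun k => i (k + n)) := piP_nonneg hp hshift
      have hAmem2 : piP p (fun k => i (k + n)) < 1 := piP_lt_one hp hpsum hshift
      obtain ⟨hr0, hr1⟩ := rem_mem hp hpsum hx n
      have habs : |piP p (fun k => i (k + n)) - rem p x n| ≤ 1 :=
        abs_le.2 ⟨by linarith, by linarith⟩
      have hPpos : 0 < ∏ m ∈ Finset.range n, p (i m) := prod_pos hp hi n
      calc |piP p i - x|
          = (∏ m ∈ Finset.range n, p (i m))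
            * |piP p (fun k => i (k + n)) - rem p x n| := by
            rw [hdiff, abs_mul, abs_of_pos hPpos]
        _ ≤ cbd p ^ n * 1 := by
            apply mul_le_mul (prod_le_pow hp hpsum hi n) habs (abs_nonneg _)
              (pow_nonneg (cbd_nonneg hp) n)
        _ = cbd p ^ n := mul_one _
    have h0 : |piP p i - x| ≤ 0 := by
      refine ge_of_tendsto (tendsto_pow_atTop_nhds_zero_of_lt_one (cbd_nonneg hp)
        (cbd_lt_one hp)) ?_
      exact Filter.Eventually.of_forall key
    have : piP p i - x = 0 := abs_eq_zero.1 (le_antisymm h0 (abs_nonneg _))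
    linarith
end

section
/- For fixed positive integers c_1, …, c_n, the cylinder set Λ^π_{c_1 c_2 … c_n} = { π_P((i_k)) : i_1 = c_1, …, i_n = c_n } is exactly the half-open interval [ π_P(c_1,…,c_{n-1},c_n,1,1,1,…), π_P(c_1,…,c_{n-1},c_n+1,1,1,1,…) ), and its Lebesgue measure equals p_{c_1} p_{c_2} ⋯ p_{c_n}. -/
open scoped BigOperators
open MeasureTheory

/-- The digit sequence `c_1, …, c_{n-1}, c_n, 1, 1, 1, …`. -/
def cylLow (c : ℕ → ℕ) (n : ℕ) : ℕ → ℕ := fun k => if k < n then c k else 1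

/-- The digit sequence `c_1, …, c_{n-1}, c_n + 1, 1, 1, 1, …`. -/
def cylHigh (c : ℕ → ℕ) (n : ℕ) : ℕ → ℕ :=
  fun k => if k + 1 < n then c k else if k + 1 = n then c k + 1 else 1

def shf (i : ℕ → ℕ) : ℕ → ℕ := fun k => i (k + 1)

lemma shf_iterate (i : ℕ → ℕ) : ∀ n k, (shf^[n] i) k = i (k + n) := by
  intro n
  induction n generalizing i with
  | zero => intro k; simp
  | succ n ih =>
      intro k
      rw [Function.iterate_succ_apply, ih (shf i) k]
      simp [shf]; ring_nf

lemma cylLow_ge_one {c : ℕ → ℕ} {n : ℕ} (hc : ∀ k, k < n → 1 ≤ c k) :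
    ∀ k, 1 ≤ cylLow c n k := by
  intro k
  rw [cylLow]
  split
  · exact hc k (by assumption)
  · exact le_rfl

lemma cylHigh_ge_one {c : ℕ → ℕ} {n : ℕ} (hc : ∀ k, k < n → 1 ≤ c k) :
    ∀ k, 1 ≤ cylHigh c n k := by
  intro k
  rw [cylHigh]
  split
  · exact hc k (by omega)
  · split
    · omega
    · exact le_rfl

lemma shf_cylLow (c : ℕ → ℕ) (n : ℕ) : shf (cylLow c (n + 1)) = cylLow (shf c) n := by
  funext k
  simp only [shf, cylLow]
  have : k + 1 < n + 1 ↔ k < n := by omega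
  rw [if_congr this rfl rfl]

lemma shf_cylHigh (c : ℕ → ℕ) (n : ℕ) : shf (cylHigh c (n + 1)) = cylHigh (shf c) n := by
  funext k
  simp only [shf, cylHigh]
  have h1 : k + 1 + 1 < n + 1 ↔ k + 1 < n := by omega
  have h2 : k + 1 + 1 = n + 1 ↔ k + 1 = n := by omega
  rw [if_congr h1 rfl (if_congr h2 rfl rfl)]


open Classical in
noncomputable def dig (p : ℕ → ℝ) (x : ℝ) : ℕ :=
  if h : ∃ j, 1 ≤ j ∧ phat p j ≤ x ∧ x < phat p (j + 1) then h.choose else 1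

noncomputable def rem (p : ℕ → ℝ) (x : ℝ) : ℕ → ℝ
  | 0 => x
  | k + 1 => (rem p x k - phat p (dig p (rem p x k))) / p (dig p (rem p x k))

section Main
variable {p : ℕ → ℝ} (hp : ∀ j, 1 ≤ j → 0 < p j ∧ p j < 1)
  (hpsum : ∑' j : ℕ, p (j + 1) = 1)
include hp hpsum
set_option linter.unusedSectionVars false

lemma phat_one : phat p 1 = 0 := by simp [phat]

lemma phat_nonneg (j : ℕ) : 0 ≤ phat p j := by
  apply Finset.sum_nonneg
  intro m hm
  exact (hp m (Finset.mem_Ico.1 hm).1).1.le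

lemma phat_succ {j : ℕ} (hj : 1 ≤ j) : phat p (j + 1) = phat p j + p j := by
  rw [phat, Finset.sum_Ico_succ_top hj]; rfl

lemma hsumm : Summable (fun j => p (j + 1)) := by
  by_contra h
  rw [tsum_eq_zero_of_not_summable h] at hpsum
  norm_num at hpsum

lemma phat_eq_range (j : ℕ) : phat p j = ∑ m ∈ Finset.range (j - 1), p (m + 1) := by
  rw [phat, Finset.sum_Ico_eq_sum_range]
  exact Finset.sum_congr rfl fun m _ => by rw [add_comm]

lemma phat_lt_one (j : ℕ) : phat p j < 1 := by
  rcases Nat.eq_zero_or_pos j with h | h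
  · simp [h, phat]
  have key : ∑ m ∈ Finset.range j, p (m + 1) ≤ 1 := by
    rw [← hpsum]
    exact Summable.sum_le_tsum _ (fun m _ => (hp (m + 1) (Nat.le_add_left 1 m)).1.le) (hsumm hp hpsum)
  have hsplit : ∑ m ∈ Finset.range j, p (m + 1)
      = ∑ m ∈ Finset.range (j - 1), p (m + 1) + p j := by
    conv_lhs => rw [show j = (j - 1) + 1 by omega]
    rw [Finset.sum_range_succ, show j - 1 + 1 = j by omega]
  rw [phat_eq_range hp hpsum]
  have := (hp j h).1
  linarith [key, hsplit ▸ key]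

lemma phat_le_one (j : ℕ) : phat p j ≤ 1 := (phat_lt_one hp hpsum j).le

lemma phat_mono : Monotone (phat p) := by
  intro a b hab
  exact Finset.sum_le_sum_of_subset_of_nonneg
    (Finset.Ico_subset_Ico le_rfl hab)
    (fun m hm _ => (hp m (Finset.mem_Ico.1 hm).1).1.le)

/-- uniform bound `p j ≤ r < 1` for `j ≥ 1`. -/
noncomputable def rbd (p : ℕ → ℝ) : ℝ := 1 - min (p 1) (p 2)

lemma pair_le_one {a b : ℕ} (ha : 1 ≤ a) (hb : 1 ≤ b) (hab : a ≠ b) : p a + p b ≤ 1 := by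
  have h : p a + p b = ∑ m ∈ ({a - 1, b - 1} : Finset ℕ), p (m + 1) := by
    rw [Finset.sum_insert (by simp; omega), Finset.sum_singleton,
      show a - 1 + 1 = a by omega, show b - 1 + 1 = b by omega]
  rw [h, ← hpsum]
  exact Summable.sum_le_tsum _ (fun m _ => (hp (m + 1) (Nat.le_add_left 1 m)).1.le) (hsumm hp hpsum)

lemma rbd_nonneg : 0 ≤ rbd p := by
  have h1 := (hp 1 le_rfl).2
  have h2 := (hp 2 (by norm_num)).2
  rw [rbd]
  rcases min_cases (p 1) (p 2) with ⟨h, _⟩ | ⟨h, _⟩ <;> rw [h] <;> linarith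

lemma rbd_lt_one : rbd p < 1 := by
  have h1 := (hp 1 le_rfl).1
  have h2 := (hp 2 (by norm_num)).1
  rw [rbd]
  rcases min_cases (p 1) (p 2) with ⟨h, _⟩ | ⟨h, _⟩ <;> rw [h] <;> linarith

lemma p_le_rbd {j : ℕ} (hj : 1 ≤ j) : p j ≤ rbd p := by
  rcases eq_or_ne j 1 with rfl | h
  · have := pair_le_one hp hpsum (le_refl 1) (by norm_num : (1:ℕ) ≤ 2) (by norm_num)
    rw [rbd]
    have : p 1 ≤ 1 - p 2 := by linarith
    rcases min_cases (p 1) (p 2) with ⟨hm, hle⟩ | ⟨hm, hle⟩ <;> rw [hm] <;> linarith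
  · have := pair_le_one hp hpsum hj le_rfl h
    rw [rbd]
    rcases min_cases (p 1) (p 2) with ⟨hm, hle⟩ | ⟨hm, hle⟩ <;> rw [hm] <;> linarith

lemma prod_le_rbd {i : ℕ → ℕ} (h1 : ∀ k, 1 ≤ i k) (K : ℕ) :
    ∏ m ∈ Finset.range K, p (i m) ≤ rbd p ^ K := by
  have h := Finset.prod_le_prod (s := Finset.range K) (f := fun m => p (i m))
    (g := fun _ => rbd p) (fun m _ => (hp (i m) (h1 m)).1.le)
    (fun m _ => p_le_rbd hp hpsum (h1 m))
  simpa using h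

lemma prod_pos {i : ℕ → ℕ} (h1 : ∀ k, 1 ≤ i k) (K : ℕ) :
    0 < ∏ m ∈ Finset.range K, p (i m) :=
  Finset.prod_pos fun m _ => (hp (i m) (h1 m)).1


lemma summable1 {i : ℕ → ℕ} (h1 : ∀ k, 1 ≤ i k) :
    Summable (fun k => phat p (i (k + 1)) * ∏ m ∈ Finset.range (k + 1), p (i m)) := by
  apply Summable.of_nonneg_of_le
  · intro k
    exact mul_nonneg (phat_nonneg hp hpsum _)
      (Finset.prod_nonneg fun m _ => (hp (i m) (h1 m)).1.le)
  · intro k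
    show phat p (i (k + 1)) * ∏ m ∈ Finset.range (k + 1), p (i m) ≤ rbd p ^ k
    have h2 : ∏ m ∈ Finset.range (k + 1), p (i m) ≤ rbd p ^ (k + 1) :=
      prod_le_rbd hp hpsum h1 (k + 1)
    have h3 : rbd p ^ (k + 1) ≤ rbd p ^ k := by
      rw [pow_succ]
      nlinarith [pow_nonneg (rbd_nonneg hp hpsum) k, rbd_lt_one hp hpsum,
        rbd_nonneg hp hpsum]
    nlinarith [phat_nonneg hp hpsum (i (k + 1)), phat_le_one hp hpsum (i (k + 1)),
      Finset.prod_nonneg (fun m (_ : m ∈ Finset.range (k + 1)) => (hp (i m) (h1 m)).1.le)]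
  · exact summable_geometric_of_lt_one (rbd_nonneg hp hpsum) (rbd_lt_one hp hpsum)

lemma summable2 {i : ℕ → ℕ} (h1 : ∀ k, 1 ≤ i k) :
    Summable (fun k => phat p (i (k + 1)) * ∏ m ∈ Finset.range k, p (i (m + 1))) := by
  apply Summable.of_nonneg_of_le
  · intro k
    exact mul_nonneg (phat_nonneg hp hpsum _)
      (Finset.prod_nonneg fun m _ => (hp (i (m + 1)) (h1 (m + 1))).1.le)
  · intro k
    show phat p (i (k + 1)) * ∏ m ∈ Finset.range k, p (i (m + 1)) ≤ rbd p ^ k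
    have h2 : ∏ m ∈ Finset.range k, p (i (m + 1)) ≤ rbd p ^ k :=
      prod_le_rbd hp hpsum (fun m => h1 (m + 1)) k
    nlinarith [phat_nonneg hp hpsum (i (k + 1)), phat_le_one hp hpsum (i (k + 1)),
      Finset.prod_nonneg (fun m (_ : m ∈ Finset.range k) => (hp (i (m + 1)) (h1 (m + 1))).1.le)]
  · exact summable_geometric_of_lt_one (rbd_nonneg hp hpsum) (rbd_lt_one hp hpsum)

lemma piP_shift {i : ℕ → ℕ} (h1 : ∀ k, 1 ≤ i k) :
    piP p i = phat p (i 0) + p (i 0) * piP p (shf i) := by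
  rw [piP, piP]
  have h2 : ∀ k : ℕ, phat p (i (k + 1)) * ∏ m ∈ Finset.range (k + 1), p (i m)
      = p (i 0) * (phat p (i (k + 1)) * ∏ m ∈ Finset.range k, p (i (m + 1))) := by
    intro k
    rw [Finset.prod_range_succ']
    ring
  rw [tsum_congr h2, tsum_mul_left]
  have h3 : (∑' k : ℕ, phat p (i (k + 1)) * ∏ m ∈ Finset.range k, p (i (m + 1)))
      = phat p (i 1) + ∑' k : ℕ, phat p (i (k + 2)) * ∏ m ∈ Finset.range (k + 1), p (i (m + 1)) := by
    rw [Summable.tsum_eq_zero_add (summable2 hp hpsum h1)]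
    simp
  rw [h3]
  simp only [shf]

lemma piP_nonneg {i : ℕ → ℕ} (h1 : ∀ k, 1 ≤ i k) : 0 ≤ piP p i := by
  rw [piP]
  have : (0:ℝ) ≤ ∑' k : ℕ, phat p (i (k + 1)) * ∏ m ∈ Finset.range (k + 1), p (i m) :=
    tsum_nonneg fun k => mul_nonneg (phat_nonneg hp hpsum _)
      (Finset.prod_nonneg fun m _ => (hp (i m) (h1 m)).1.le)
  have h0 := phat_nonneg hp hpsum (i 0)
  linarith

lemma piP_le {i : ℕ → ℕ} (h1 : ∀ k, 1 ≤ i k) : piP p i ≤ phat p (i 0) + p (i 0) := by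
  rw [piP]
  have key : ∀ K : ℕ, ∑ k ∈ Finset.range K, phat p (i (k + 1)) * ∏ m ∈ Finset.range (k + 1), p (i m)
      ≤ p (i 0) - ∏ m ∈ Finset.range (K + 1), p (i m) := by
    intro K
    induction K with
    | zero => simp
    | succ K ih =>
        rw [Finset.sum_range_succ]
        have hQ : (0:ℝ) < ∏ m ∈ Finset.range (K + 1), p (i m) := prod_pos hp hpsum h1 (K + 1)
        have hph : phat p (i (K + 1)) ≤ 1 - p (i (K + 1)) := by
          have := phat_succ hp hpsum (h1 (K + 1))
          have := phat_le_one hp hpsum (i (K + 1) + 1)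
          linarith
        have hstep : ∏ m ∈ Finset.range (K + 2), p (i m)
            = (∏ m ∈ Finset.range (K + 1), p (i m)) * p (i (K + 1)) := by
          rw [Finset.prod_range_succ]
        nlinarith
  have h4 : (∑' k : ℕ, phat p (i (k + 1)) * ∏ m ∈ Finset.range (k + 1), p (i m)) ≤ p (i 0) := by
    apply Summable.tsum_le_of_sum_range_le (summable1 hp hpsum h1)
    intro K
    have := key K
    have := (prod_pos hp hpsum h1 (K + 1)).le
    linarith
  linarith

lemma piP_lt_one {i : ℕ → ℕ} (h1 : ∀ k, 1 ≤ i k) : piP p i < 1 := by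
  have h2 := piP_le hp hpsum h1
  have h3 : phat p (i 0) + p (i 0) = phat p (i 0 + 1) := (phat_succ hp hpsum (h1 0)).symm
  have h4 := phat_lt_one hp hpsum (i 0 + 1)
  linarith

lemma piP_const_one : piP p (fun _ => 1) = 0 := by
  rw [piP]
  simp [phat_one hp hpsum]

lemma piP_single (d : ℕ) : piP p (fun k => if k = 0 then d else 1) = phat p d := by
  rw [piP]
  simp [phat_one hp hpsum]


lemma piP_decomp (n : ℕ) (i : ℕ → ℕ) (h1 : ∀ k, 1 ≤ i k) :
    piP p i = piP p (cylLow i n)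
      + (∏ m ∈ Finset.range n, p (i m)) * piP p (shf^[n] i) := by
  induction n generalizing i with
  | zero =>
      have h0 : cylLow i 0 = fun _ => 1 := by
        funext k; simp [cylLow]
      rw [h0, piP_const_one hp hpsum]
      simp
  | succ n ih =>
      have hs : ∀ k, 1 ≤ shf i k := fun k => h1 (k + 1)
      have hL : piP p (cylLow i (n + 1))
          = phat p (i 0) + p (i 0) * piP p (cylLow (shf i) n) := by
        rw [piP_shift hp hpsum (cylLow_ge_one (fun k _ => h1 k)), shf_cylLow]
        have h0 : cylLow i (n + 1) 0 = i 0 := by simp [cylLow]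
        rw [h0]
      have hprod : ∏ m ∈ Finset.range (n + 1), p (i m)
          = p (i 0) * ∏ m ∈ Finset.range n, p (shf i m) := by
        rw [Finset.prod_range_succ']
        simp only [shf]
        ring
      rw [piP_shift hp hpsum h1, ih (shf i) hs, hL, hprod,
        Function.iterate_succ_apply]
      ring

lemma piP_high (n : ℕ) (hn : 1 ≤ n) (c : ℕ → ℕ) (hc : ∀ k, k < n → 1 ≤ c k) :
    piP p (cylHigh c n) = piP p (cylLow c n) + ∏ m ∈ Finset.range n, p (c m) := by
  induction n, hn using Nat.le_induction generalizing c with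
  | base =>
      have hH : cylHigh c 1 = fun k => if k = 0 then c 0 + 1 else 1 := by
        funext k
        simp only [cylHigh]
        rcases Nat.eq_zero_or_pos k with rfl | h
        · norm_num
        · have h1 : ¬ (k + 1 < 1) := by omega
          have h2 : ¬ (k + 1 = 1) := by omega
          have h3 : ¬ (k = 0) := by omega
          simp [h1, h2, h3]
      have hL : cylLow c 1 = fun k => if k = 0 then c 0 else 1 := by
        funext k
        simp only [cylLow]
        rcases Nat.eq_zero_or_pos k with rfl | h
        · norm_num
        · have h1 : ¬ (k < 1) := by omega
          have h3 : ¬ (k = 0) := by omega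
          simp [h1, h3]
      rw [hH, hL, piP_single hp hpsum, piP_single hp hpsum,
        phat_succ hp hpsum (hc 0 (by norm_num))]
      simp
  | succ n hn ih =>
      have hc' : ∀ k, k < n → 1 ≤ shf c k := fun k hk => hc (k + 1) (by omega)
      have h0H : cylHigh c (n + 1) 0 = c 0 := by
        simp only [cylHigh]
        have : 0 + 1 < n + 1 := by omega
        simp [this]
      have h0L : cylLow c (n + 1) 0 = c 0 := by simp [cylLow]
      have hprod : ∏ m ∈ Finset.range (n + 1), p (c m)
          = p (c 0) * ∏ m ∈ Finset.range n, p (shf c m) := by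
        rw [Finset.prod_range_succ']
        simp only [shf]
        ring
      rw [piP_shift hp hpsum (cylHigh_ge_one hc), shf_cylHigh, h0H,
        piP_shift hp hpsum (cylLow_ge_one hc), shf_cylLow, h0L,
        ih (shf c) hc', hprod]
      ring


lemma exists_digit {x : ℝ} (h0 : 0 ≤ x) (h1 : x < 1) :
    ∃ j, 1 ≤ j ∧ phat p j ≤ x ∧ x < phat p (j + 1) := by
  have hex : ∃ m, x < phat p (m + 1) := by
    have hs : HasSum (fun j => p (j + 1)) 1 := by
      rw [← hpsum]; exact (hsumm hp hpsum).hasSum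
    have ht := hs.tendsto_sum_nat
    have hev : ∀ᶠ m in Filter.atTop, x < ∑ i ∈ Finset.range m, p (i + 1) :=
      ht.eventually (eventually_gt_nhds h1)
    obtain ⟨m, hm⟩ := hev.exists
    refine ⟨m, ?_⟩
    rwa [phat_eq_range hp hpsum, Nat.add_sub_cancel]
  classical
  set N := Nat.find hex with hN
  have hNspec : x < phat p (N + 1) := Nat.find_spec hex
  have hN1 : 1 ≤ N := by
    by_contra h
    have : N = 0 := by omega
    rw [this] at hNspec
    have : phat p 1 = 0 := phat_one hp hpsum
    linarith
  refine ⟨N, hN1, ?_, hNspec⟩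
  have hmin : ¬ (x < phat p (N - 1 + 1)) := Nat.find_min hex (by omega)
  rw [show N - 1 + 1 = N by omega] at hmin
  linarith

lemma dig_spec {x : ℝ} (h0 : 0 ≤ x) (h1 : x < 1) :
    1 ≤ dig p x ∧ phat p (dig p x) ≤ x ∧ x < phat p (dig p x + 1) := by
  have hex := exists_digit hp hpsum h0 h1
  rw [dig]
  rw [dif_pos hex]
  exact hex.choose_spec

lemma rem_mem {x : ℝ} (h0 : 0 ≤ x) (h1 : x < 1) :
    ∀ k, 0 ≤ rem p x k ∧ rem p x k < 1 := by
  intro k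
  induction k with
  | zero => exact ⟨h0, h1⟩
  | succ k ih =>
      obtain ⟨hk0, hk1⟩ := ih
      obtain ⟨hd1, hd2, hd3⟩ := dig_spec hp hpsum hk0 hk1
      have hpd : 0 < p (dig p (rem p x k)) := (hp _ hd1).1
      have hsucc := phat_succ hp hpsum hd1
      constructor
      · rw [rem]
        apply div_nonneg _ hpd.le
        linarith
      · rw [rem]
        rw [div_lt_one hpd]
        linarith

lemma rem_rec {x : ℝ} (h0 : 0 ≤ x) (h1 : x < 1) (k : ℕ) :
    rem p x k = phat p (dig p (rem p x k))
      + p (dig p (rem p x k)) * rem p x (k + 1) := by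
  obtain ⟨hk0, hk1⟩ := rem_mem hp hpsum h0 h1 k
  obtain ⟨hd1, _, _⟩ := dig_spec hp hpsum hk0 hk1
  have hpd : p (dig p (rem p x k)) ≠ 0 := (hp _ hd1).1.ne'
  rw [rem]
  field_simp
  ring

lemma dig_ge_one {x : ℝ} (h0 : 0 ≤ x) (h1 : x < 1) (k : ℕ) :
    1 ≤ dig p (rem p x k) := by
  obtain ⟨hk0, hk1⟩ := rem_mem hp hpsum h0 h1 k
  exact (dig_spec hp hpsum hk0 hk1).1

lemma rem_key {x : ℝ} (h0 : 0 ≤ x) (h1 : x < 1) (nn : ℕ) :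
    x - piP p (cylLow (fun k => dig p (rem p x k)) nn)
      = (∏ m ∈ Finset.range nn, p (dig p (rem p x m))) * rem p x nn := by
  set j : ℕ → ℕ := fun k => dig p (rem p x k) with hj
  have hj1 : ∀ k, 1 ≤ j k := fun k => dig_ge_one hp hpsum h0 h1 k
  induction nn with
  | zero =>
      have h00 : cylLow j 0 = fun _ => 1 := by funext k; simp [cylLow]
      rw [h00, piP_const_one hp hpsum]
      simp [rem]
  | succ nn ih =>
      have hdec := piP_decomp hp hpsum nn (cylLow j (nn + 1))
        (cylLow_ge_one fun k _ => hj1 k)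
      have hA : cylLow (cylLow j (nn + 1)) nn = cylLow j nn := by
        funext k
        simp only [cylLow]
        by_cases hk : k < nn
        · rw [if_pos hk, if_pos (by omega : k < nn + 1), if_pos hk]
        · rw [if_neg hk, if_neg hk]
      have hB : ∏ m ∈ Finset.range nn, p (cylLow j (nn + 1) m)
          = ∏ m ∈ Finset.range nn, p (j m) := by
        apply Finset.prod_congr rfl
        intro m hm
        have : m < nn + 1 := by
          have := Finset.mem_range.1 hm; omega
        simp [cylLow, this]
      have hC : shf^[nn] (cylLow j (nn + 1)) = fun k => if k = 0 then j nn else 1 := by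
        funext k
        rw [shf_iterate]
        simp only [cylLow]
        by_cases hk : k = 0
        · subst hk
          rw [if_pos (by omega : 0 + nn < nn + 1), if_pos rfl]
          norm_num
        · rw [if_neg (by omega : ¬ (k + nn < nn + 1)), if_neg hk]
      rw [hA, hB, hC, piP_single hp hpsum] at hdec
      have hrec := rem_rec hp hpsum h0 h1 nn
      have hQ : ∏ m ∈ Finset.range (nn + 1), p (j m)
          = (∏ m ∈ Finset.range nn, p (j m)) * p (j nn) := Finset.prod_range_succ _ _
      rw [hdec, hQ]
      have : x - piP p (cylLow j nn) = (∏ m ∈ Finset.range nn, p (j m)) * rem p x nn := ih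
      rw [hrec] at this
      nlinarith [this]

lemma piP_surj {x : ℝ} (h0 : 0 ≤ x) (h1 : x < 1) :
    ∃ i : ℕ → ℕ, (∀ k, 1 ≤ i k) ∧ piP p i = x := by
  set j : ℕ → ℕ := fun k => dig p (rem p x k) with hjdef
  have hj1 : ∀ k, 1 ≤ j k := fun k => dig_ge_one hp hpsum h0 h1 k
  refine ⟨j, hj1, ?_⟩
  have habs : ∀ nn : ℕ, |piP p j - x| ≤ rbd p ^ nn := by
    intro nn
    have hd := piP_decomp hp hpsum nn j hj1
    have hk := rem_key hp hpsum h0 h1 nn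
    set Q := ∏ m ∈ Finset.range nn, p (j m) with hQdef
    have hQ0 : 0 < Q := prod_pos hp hpsum hj1 nn
    have hQr : Q ≤ rbd p ^ nn := prod_le_rbd hp hpsum hj1 nn
    have hsh : ∀ k, 1 ≤ (shf^[nn] j) k := by
      intro k; rw [shf_iterate]; exact hj1 _
    have ht0 : 0 ≤ piP p (shf^[nn] j) := piP_nonneg hp hpsum hsh
    have ht1 : piP p (shf^[nn] j) < 1 := piP_lt_one hp hpsum hsh
    obtain ⟨hs0, hs1⟩ := rem_mem hp hpsum h0 h1 nn
    have heq : piP p j - x = Q * (piP p (shf^[nn] j) - rem p x nn) := by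
      linear_combination hd - hk
    rw [heq, abs_mul, abs_of_pos hQ0]
    have habs1 : |piP p (shf^[nn] j) - rem p x nn| ≤ 1 :=
      abs_le.2 ⟨by linarith, by linarith⟩
    nlinarith [abs_nonneg (piP p (shf^[nn] j) - rem p x nn)]
  have htend : Filter.Tendsto (fun nn : ℕ => rbd p ^ nn) Filter.atTop (nhds 0) :=
    tendsto_pow_atTop_nhds_zero_of_lt_one (rbd_nonneg hp hpsum) (rbd_lt_one hp hpsum)
  have : |piP p j - x| ≤ 0 := ge_of_tendsto htend (Filter.Eventually.of_forall habs)
  have := abs_nonpos_iff.1 this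
  linarith [sub_eq_zero.1 this]

end Main

/-- The cylinder `Λ^π_{c_1 … c_n}` is exactly the half-open interval
`[π_P(c_1,…,c_n,1,1,…), π_P(c_1,…,c_n+1,1,1,…))`, and its Lebesgue measure
equals `p_{c_1} ⋯ p_{c_n}`. -/
theorem stmt2 (p : ℕ → ℝ) (hp : ∀ j, 1 ≤ j → 0 < p j ∧ p j < 1)
    (hpsum : ∑' j : ℕ, p (j + 1) = 1)
    (n : ℕ) (hn : 1 ≤ n) (c : ℕ → ℕ) (hc : ∀ k, k < n → 1 ≤ c k) :
    piP p '' {i : ℕ → ℕ | (∀ k, 1 ≤ i k) ∧ ∀ k, k < n → i k = c k} =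
      Set.Ico (piP p (cylLow c n)) (piP p (cylHigh c n)) ∧
    volume (piP p '' {i : ℕ → ℕ | (∀ k, 1 ≤ i k) ∧ ∀ k, k < n → i k = c k}) =
      ENNReal.ofReal (∏ m ∈ Finset.range n, p (c m)) := by
  have hQpos : 0 < ∏ m ∈ Finset.range n, p (c m) :=
    Finset.prod_pos fun m hm => (hp (c m) (hc m (Finset.mem_range.1 hm))).1
  have hH : piP p (cylHigh c n) = piP p (cylLow c n) + ∏ m ∈ Finset.range n, p (c m) :=
    piP_high hp hpsum n hn c hc
  have hset : piP p '' {i : ℕ → ℕ | (∀ k, 1 ≤ i k) ∧ ∀ k, k < n → i k = c k} =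
      Set.Ico (piP p (cylLow c n)) (piP p (cylHigh c n)) := by
    apply Set.eq_of_subset_of_subset
    · rintro y ⟨i, ⟨hi1, hi2⟩, rfl⟩
      have hd := piP_decomp hp hpsum n i hi1
      have hlow : cylLow i n = cylLow c n := by
        funext k; simp only [cylLow]; split
        · exact hi2 k (by assumption)
        · rfl
      have hpr : ∏ m ∈ Finset.range n, p (i m) = ∏ m ∈ Finset.range n, p (c m) :=
        Finset.prod_congr rfl fun m hm => by rw [hi2 m (Finset.mem_range.1 hm)]
      have hsh : ∀ k, 1 ≤ (shf^[n] i) k := fun k => by rw [shf_iterate]; exact hi1 _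
      have ht0 := piP_nonneg hp hpsum hsh
      have ht1 := piP_lt_one hp hpsum hsh
      rw [hlow, hpr] at hd
      constructor
      · nlinarith
      · rw [hH]; nlinarith
    · rintro y ⟨hy1, hy2⟩
      rw [hH] at hy2
      set Q := ∏ m ∈ Finset.range n, p (c m) with hQ
      set t := (y - piP p (cylLow c n)) / Q with ht
      have ht0 : 0 ≤ t := div_nonneg (by linarith) hQpos.le
      have ht1 : t < 1 := by rw [ht, div_lt_one hQpos]; linarith
      obtain ⟨jj, hjj1, hjj2⟩ := piP_surj hp hpsum ht0 ht1
      refine ⟨fun k => if k < n then c k else jj (k - n), ⟨?_, ?_⟩, ?_⟩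
      · intro k; dsimp only; split
        · exact hc k (by assumption)
        · exact hjj1 _
      · intro k hk; simp [hk]
      · set i : ℕ → ℕ := fun k => if k < n then c k else jj (k - n) with hi
        have hi1 : ∀ k, 1 ≤ i k := by
          intro k; rw [hi]; dsimp only; split
          · exact hc k (by assumption)
          · exact hjj1 _
        have hd := piP_decomp hp hpsum n i hi1
        have hlow : cylLow i n = cylLow c n := by
          funext k; simp only [cylLow, hi]
          by_cases hk : k < n
          · simp [hk]
          · simp [hk]
        have hpr : ∏ m ∈ Finset.range n, p (i m) = Q := by
          rw [hQ]
          exact Finset.prod_congr rfl fun m hm => by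
            have h2 := Finset.mem_range.1 hm
            simp [hi, h2]
        have hshn : shf^[n] i = jj := by
          funext k
          rw [shf_iterate, hi]
          have h1 : ¬ (k + n < n) := by omega
          simp [h1]
        rw [hlow, hpr, hshn, hjj2] at hd
        have hQt : Q * t = y - piP p (cylLow c n) := by
          rw [ht]
          field_simp
        linarith [hd, hQt]
  refine ⟨hset, ?_⟩
  rw [hset, Real.volume_Ico, hH]
  congr 1
  ring
end

section
/- The function M_π satisfies the system of functional equations M_π(σ^{n−1}(x)) = 2^{1−i_n} · (1 − M_π(σ^n(x))/2) for every x = π_P(i_1, i_2, …) in [0,1) and every n ≥ 1; equivalently, h = M_π/2 satisfies h(σ^{n−1}(x)) = 2^{−i_n}(1 − h(σ^n(x))). -/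
open scoped BigOperators
open MeasureTheory

lemma Mseq_summable (i : ℕ → ℕ) (hi : ∀ k, 1 ≤ i k) :
    Summable (fun k : ℕ =>
      (-1 : ℝ) ^ k * (2 : ℝ) ^ ((1 : ℤ) - ∑ m ∈ Finset.range (k + 1), (i m : ℤ))) := by
  apply Summable.of_norm_bounded (g := fun k : ℕ => (1/2 : ℝ) ^ k)
    (summable_geometric_of_lt_one (by norm_num) (by norm_num))
  intro k
  have hS : (k : ℤ) + 1 ≤ ∑ m ∈ Finset.range (k + 1), (i m : ℤ) := by
    calc (k : ℤ) + 1 = ∑ m ∈ Finset.range (k + 1), (1 : ℤ) := by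
          simp
      _ ≤ ∑ m ∈ Finset.range (k + 1), (i m : ℤ) :=
          Finset.sum_le_sum (fun m _ => by exact_mod_cast hi m)
  have h1 : (1 : ℤ) - ∑ m ∈ Finset.range (k + 1), (i m : ℤ) ≤ -(k : ℤ) := by linarith
  have h2 : (2 : ℝ) ^ ((1 : ℤ) - ∑ m ∈ Finset.range (k + 1), (i m : ℤ))
      ≤ (2 : ℝ) ^ (-(k : ℤ)) := by
    exact zpow_le_zpow_right₀ (by norm_num) h1
  have h3 : (2 : ℝ) ^ (-(k : ℤ)) = (1/2 : ℝ) ^ k := by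
    rw [zpow_neg, one_div, inv_pow]
    norm_num
  rw [norm_mul, norm_pow, norm_neg, norm_one, one_pow, one_mul]
  rw [Real.norm_eq_abs, abs_of_pos (zpow_pos (by norm_num) _)]
  linarith [h2, h3.le]

lemma Mseq_rec (i : ℕ → ℕ) (hi : ∀ k, 1 ≤ i k) :
    Mseq i = (2 : ℝ) ^ ((1 : ℤ) - (i 0 : ℤ)) * (1 - Mseq (fun k => i (k + 1)) / 2) := by
  have hsum := Mseq_summable i hi
  unfold Mseq
  rw [Summable.tsum_eq_zero_add hsum]
  have hterm : ∀ k : ℕ,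
      (-1 : ℝ) ^ (k + 1) * (2 : ℝ) ^ ((1 : ℤ) - ∑ m ∈ Finset.range (k + 1 + 1), (i m : ℤ))
      = -(2 : ℝ) ^ (-(i 0 : ℤ)) *
        ((-1 : ℝ) ^ k * (2 : ℝ) ^ ((1 : ℤ) - ∑ m ∈ Finset.range (k + 1), (i (m + 1) : ℤ))) := by
    intro k
    have hS : ∑ m ∈ Finset.range (k + 1 + 1), (i m : ℤ)
        = (i 0 : ℤ) + ∑ m ∈ Finset.range (k + 1), (i (m + 1) : ℤ) := by
      rw [Finset.sum_range_succ']
      ring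
    rw [hS]
    have : (1 : ℤ) - ((i 0 : ℤ) + ∑ m ∈ Finset.range (k + 1), (i (m + 1) : ℤ))
        = (-(i 0 : ℤ)) + ((1 : ℤ) - ∑ m ∈ Finset.range (k + 1), (i (m + 1) : ℤ)) := by ring
    rw [this, zpow_add₀ (by norm_num : (2:ℝ) ≠ 0)]
    push_cast
    ring
  simp only [hterm]
  rw [tsum_mul_left]
  have hMs : Mseq (fun k => i (k + 1)) =
      ∑' k : ℕ, (-1 : ℝ) ^ k * (2 : ℝ) ^ ((1 : ℤ) - ∑ m ∈ Finset.range (k + 1), (i (m + 1) : ℤ)) := rfl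
  rw [← hMs]
  have h0 : ∑ m ∈ Finset.range (0 + 1), (i m : ℤ) = (i 0 : ℤ) := by simp
  rw [h0]
  have : (1 : ℤ) - (i 0 : ℤ) = (-(i 0 : ℤ)) + 1 := by ring
  rw [this, zpow_add₀ (by norm_num : (2:ℝ) ≠ 0)]
  ring

lemma iter_shift (p : ℝ → ℝ) : True := trivial

lemma sigma_iter (p : ℕ → ℝ) (σ : ℝ → ℝ)
    (hσ : ∀ i : ℕ → ℕ, (∀ k, 1 ≤ i k) → σ (piP p i) = piP p (fun k => i (k + 1)))
    (i : ℕ → ℕ) (hi : ∀ k, 1 ≤ i k) (m : ℕ) :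
    σ^[m] (piP p i) = piP p (fun k => i (k + m)) := by
  induction m with
  | zero => simp
  | succ m ih =>
    rw [Function.iterate_succ', Function.comp_apply, ih,
      hσ (fun k => i (k + m)) (fun k => hi _)]
    congr 1
    funext k
    congr 1
    omega

/-- The Minkowski type function satisfies the system of functional equations
`M_π(σ^{n−1}(x)) = 2^{1−i_n} (1 − M_π(σ^n(x))/2)` for every `x = π_P(i_1, i_2, …)`
and every `n ≥ 1`. -/
theorem stmt6 (p : ℕ → ℝ) (hp : ∀ j, 1 ≤ j → 0 < p j ∧ p j < 1)
    (hpsum : ∑' j : ℕ, p (j + 1) = 1)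
    (σ M : ℝ → ℝ)
    (hσ : ∀ i : ℕ → ℕ, (∀ k, 1 ≤ i k) → σ (piP p i) = piP p (fun k => i (k + 1)))
    (hM : ∀ i : ℕ → ℕ, (∀ k, 1 ≤ i k) → M (piP p i) = Mseq i)
    (i : ℕ → ℕ) (hi : ∀ k, 1 ≤ i k) (n : ℕ) (hn : 1 ≤ n) :
    M (σ^[n - 1] (piP p i)) =
      (2 : ℝ) ^ ((1 : ℤ) - (i (n - 1) : ℤ)) * (1 - M (σ^[n] (piP p i)) / 2) := by
  obtain ⟨m, rfl⟩ : ∃ m, n = m + 1 := ⟨n - 1, by omega⟩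
  simp only [Nat.add_sub_cancel]
  rw [sigma_iter p σ hσ i hi m, sigma_iter p σ hσ i hi (m + 1),
    hM _ (fun k => hi _), hM _ (fun k => hi _)]
  have := Mseq_rec (fun k => i (k + m)) (fun k => hi _)
  simp only [Nat.zero_add] at this
  have heq : (fun k => i (k + 1 + m)) = (fun k => i (k + (m + 1))) := by
    funext k; congr 1; omega
  rw [heq] at this
  rw [this]
end

section
/- The system of functional equations h(σ^{n−1}(x)) = 2^{−i_n} · (1 − h(σ^n(x))), required to hold for every x = π_P(i_1, i_2, …) in [0,1) and every n ≥ 1, has a unique solution in the class of bounded functions h : [0,1) → ℝ, namely h(x) = M_π(x)/2 = 2^{−i_1} − 2^{−i_1−i_2} + ⋯ + (−1)^{n−1} 2^{−i_1−i_2−⋯−i_n} + ⋯. -/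
open scoped BigOperators
open MeasureTheory

namespace Aux14

variable {p : ℕ → ℝ}

def Valid (i : ℕ → ℕ) : Prop := ∀ k, 1 ≤ i k

abbrev HP (p : ℕ → ℝ) : Prop := ∀ j, 1 ≤ j → 0 < p j ∧ p j < 1

lemma psummable (hpsum : ∑' j : ℕ, p (j + 1) = 1) : Summable (fun j => p (j + 1)) := by
  by_contra h
  rw [tsum_eq_zero_of_not_summable h] at hpsum
  norm_num at hpsum

lemma phat_nonneg (hp : HP p) (j : ℕ) : 0 ≤ phat p j :=
  Finset.sum_nonneg fun m hm => (hp m (Finset.mem_Ico.1 hm).1).1.le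

lemma phat_mono (hp : HP p) {m n : ℕ} (h : m ≤ n) : phat p m ≤ phat p n :=
  Finset.sum_le_sum_of_subset_of_nonneg
    (Finset.Ico_subset_Ico le_rfl h)
    (fun j hj _ => (hp j (Finset.mem_Ico.1 hj).1).1.le)

lemma phat_succ {j : ℕ} (hj : 1 ≤ j) : phat p (j + 1) = phat p j + p j := by
  unfold phat
  rw [Finset.sum_Ico_succ_top hj]

lemma phat_le_one (hp : HP p) (hpsum : ∑' j : ℕ, p (j + 1) = 1) (n : ℕ) :
    phat p n ≤ 1 := by
  unfold phat
  rw [Finset.sum_Ico_eq_sum_range]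
  calc ∑ k ∈ Finset.range (n - 1), p (1 + k)
      = ∑ k ∈ Finset.range (n - 1), p (k + 1) := by
        apply Finset.sum_congr rfl; intro k _; rw [Nat.add_comm]
    _ ≤ ∑' k : ℕ, p (k + 1) :=
        Summable.sum_le_tsum _ (fun k _ => (hp (k+1) (Nat.le_add_left 1 k)).1.le)
          (psummable hpsum)
    _ = 1 := hpsum

lemma prod_pos (hp : HP p) {i : ℕ → ℕ} (hi : Valid i) (k : ℕ) :
    0 < ∏ m ∈ Finset.range k, p (i m) :=
  Finset.prod_pos fun m _ => (hp (i m) (hi m)).1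

lemma prod_le_one (hp : HP p) {i : ℕ → ℕ} (hi : Valid i) (k : ℕ) :
    ∏ m ∈ Finset.range k, p (i m) ≤ 1 :=
  Finset.prod_le_one (fun m _ => (hp (i m) (hi m)).1.le)
    (fun m _ => (hp (i m) (hi m)).2.le)

lemma phat_add_le (hp : HP p) (hpsum : ∑' j : ℕ, p (j + 1) = 1) {j : ℕ} (hj : 1 ≤ j) :
    phat p j + p j + p (j + 1) ≤ 1 := by
  have h1 : phat p (j + 1) = phat p j + p j := phat_succ hj
  have h2 : phat p (j + 2) = phat p (j + 1) + p (j + 1) := phat_succ (by omega)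
  have := phat_le_one hp hpsum (j + 2)
  rw [h2, h1] at this
  linarith

-- g k ≤ Π_{k+1} - Π_{k+2}
lemma g_le (hp : HP p) (hpsum : ∑' j : ℕ, p (j + 1) = 1) {i : ℕ → ℕ} (hi : Valid i) (k : ℕ) :
    phat p (i (k + 1)) * ∏ m ∈ Finset.range (k + 1), p (i m)
      ≤ (∏ m ∈ Finset.range (k + 1), p (i m)) - ∏ m ∈ Finset.range (k + 2), p (i m) := by
  have hPr : (0:ℝ) < ∏ m ∈ Finset.range (k + 1), p (i m) := prod_pos hp hi (k+1)
  have h1 : phat p (i (k + 1)) ≤ 1 - p (i (k + 1)) := by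
    have := phat_add_le hp hpsum (hi (k+1))
    have hpos := (hp (i (k+1) + 1) (by omega)).1
    linarith
  have h2 : ∏ m ∈ Finset.range (k + 2), p (i m)
      = (∏ m ∈ Finset.range (k + 1), p (i m)) * p (i (k + 1)) := Finset.prod_range_succ _ _
  calc phat p (i (k + 1)) * ∏ m ∈ Finset.range (k + 1), p (i m)
      ≤ (1 - p (i (k + 1))) * ∏ m ∈ Finset.range (k + 1), p (i m) := by
        apply mul_le_mul_of_nonneg_right h1 hPr.le
    _ = _ := by rw [h2]; ring

lemma g_nonneg (hp : HP p) {i : ℕ → ℕ} (hi : Valid i) (k : ℕ) :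
    0 ≤ phat p (i (k + 1)) * ∏ m ∈ Finset.range (k + 1), p (i m) :=
  mul_nonneg (phat_nonneg hp _) (prod_pos hp hi _).le

lemma sum_range_g_le (hp : HP p) (hpsum : ∑' j : ℕ, p (j + 1) = 1) {i : ℕ → ℕ}
    (hi : Valid i) (n : ℕ) :
    ∑ k ∈ Finset.range n, phat p (i (k + 1)) * ∏ m ∈ Finset.range (k + 1), p (i m)
      ≤ p (i 0) := by
  have h2 : ∀ N : ℕ, ∑ k ∈ Finset.range N, ((∏ m ∈ Finset.range (k + 1), p (i m))
          - ∏ m ∈ Finset.range (k + 2), p (i m))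
      = (∏ m ∈ Finset.range 1, p (i m)) - ∏ m ∈ Finset.range (N + 1), p (i m) := by
    intro N
    induction N with
    | zero => simp
    | succ N ih => rw [Finset.sum_range_succ, ih]; ring
  have h1 : ∑ k ∈ Finset.range n, phat p (i (k + 1)) * ∏ m ∈ Finset.range (k + 1), p (i m)
      ≤ ∑ k ∈ Finset.range n, ((∏ m ∈ Finset.range (k + 1), p (i m))
          - ∏ m ∈ Finset.range (k + 2), p (i m)) :=
    Finset.sum_le_sum fun k _ => g_le hp hpsum hi k
  have h2 := h2 n
  have h3 : (0:ℝ) < ∏ m ∈ Finset.range (n + 1), p (i m) := prod_pos hp hi _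
  have h4 : (∏ m ∈ Finset.range 1, p (i m)) = p (i 0) := by simp
  linarith

lemma g_summable (hp : HP p) (hpsum : ∑' j : ℕ, p (j + 1) = 1) {i : ℕ → ℕ} (hi : Valid i) :
    Summable (fun k => phat p (i (k + 1)) * ∏ m ∈ Finset.range (k + 1), p (i m)) :=
  summable_of_sum_range_le (g_nonneg hp hi) (sum_range_g_le hp hpsum hi)

lemma tsum_g_le (hp : HP p) (hpsum : ∑' j : ℕ, p (j + 1) = 1) {i : ℕ → ℕ} (hi : Valid i) :
    ∑' k, phat p (i (k + 1)) * ∏ m ∈ Finset.range (k + 1), p (i m) ≤ p (i 0) :=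
  Summable.tsum_le_of_sum_range_le (g_summable hp hpsum hi) (sum_range_g_le hp hpsum hi)

lemma piP_nonneg (hp : HP p) (hpsum : ∑' j : ℕ, p (j + 1) = 1) {i : ℕ → ℕ} (hi : Valid i) :
    0 ≤ piP p i := by
  have := tsum_nonneg (L := SummationFilter.unconditional ℕ) (g_nonneg hp hi)
  have := phat_nonneg hp (i 0)
  unfold piP; linarith

lemma phat_le_piP (hp : HP p) {i : ℕ → ℕ} (hi : Valid i) : phat p (i 0) ≤ piP p i := by
  have := tsum_nonneg (L := SummationFilter.unconditional ℕ) (g_nonneg hp hi)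
  unfold piP; linarith

lemma piP_lt_one (hp : HP p) (hpsum : ∑' j : ℕ, p (j + 1) = 1) {i : ℕ → ℕ} (hi : Valid i) :
    piP p i < 1 := by
  have h1 := tsum_g_le hp hpsum hi
  have h2 := phat_add_le hp hpsum (hi 0)
  have h3 := (hp (i 0 + 1) (by omega)).1
  unfold piP; linarith

lemma piP_rec (hp : HP p) (hpsum : ∑' j : ℕ, p (j + 1) = 1) {i : ℕ → ℕ} (hi : Valid i) :
    piP p i = phat p (i 0) + p (i 0) * piP p (fun k => i (k + 1)) := by
  set f : ℕ → ℝ := fun k => phat p (i (k + 1)) * ∏ m ∈ Finset.range k, p (i (m + 1)) with hf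
  have hshift : Valid (fun k => i (k + 1)) := fun k => hi (k + 1)
  have hfs : Summable (fun k => f (k + 1)) := by
    have := g_summable hp hpsum hshift
    convert this using 2 with k
  have hfsum : Summable f := (summable_nat_add_iff 1).1 hfs
  have hg : ∀ k, phat p (i (k + 1)) * ∏ m ∈ Finset.range (k + 1), p (i m)
      = p (i 0) * f k := by
    intro k
    rw [hf]
    simp only []
    rw [Finset.prod_range_succ']
    ring
  have h1 : (∑' k, phat p (i (k + 1)) * ∏ m ∈ Finset.range (k + 1), p (i m))
      = p (i 0) * ∑' k, f k := by
    rw [← tsum_mul_left]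
    exact tsum_congr hg
  have h2 : (∑' k, f k) = f 0 + ∑' k, f (k + 1) := Summable.tsum_eq_zero_add hfsum
  have h3 : f 0 = phat p (i 1) := by simp [hf]
  have h4 : (∑' k, f (k + 1)) = ∑' k, phat p (i (k + 1 + 1)) *
      ∏ m ∈ Finset.range (k + 1), p (i (m + 1)) := by
    apply tsum_congr; intro k; simp [hf]
  unfold piP
  rw [h1, h2, h3, h4]

lemma piP_lt (hp : HP p) (hpsum : ∑' j : ℕ, p (j + 1) = 1) {i : ℕ → ℕ} (hi : Valid i) :
    piP p i < phat p (i 0) + p (i 0) := by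
  have h1 := piP_rec hp hpsum hi
  have h2 : piP p (fun k => i (k + 1)) < 1 := piP_lt_one hp hpsum (fun k => hi (k+1))
  have h3 := (hp (i 0) (hi 0)).1
  nlinarith

lemma digit0_eq (hp : HP p) (hpsum : ∑' j : ℕ, p (j + 1) = 1) {i j : ℕ → ℕ}
    (hi : Valid i) (hj : Valid j) (h : piP p i = piP p j) : i 0 = j 0 := by
  by_contra hne
  rcases Nat.lt_or_ge (i 0) (j 0) with hlt | hge
  · have h1 := piP_lt hp hpsum hi
    have h2 : phat p (i 0 + 1) ≤ phat p (j 0) := phat_mono hp hlt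
    have h3 : phat p (i 0 + 1) = phat p (i 0) + p (i 0) := phat_succ (hi 0)
    have h4 := phat_le_piP hp hj
    linarith
  · have hlt : j 0 < i 0 := by omega
    have h1 := piP_lt hp hpsum hj
    have h2 : phat p (j 0 + 1) ≤ phat p (i 0) := phat_mono hp hlt
    have h3 : phat p (j 0 + 1) = phat p (j 0) + p (j 0) := phat_succ (hj 0)
    have h4 := phat_le_piP hp hi
    linarith

lemma piP_inj (hp : HP p) (hpsum : ∑' j : ℕ, p (j + 1) = 1) {i j : ℕ → ℕ}
    (hi : Valid i) (hj : Valid j) (h : piP p i = piP p j) : ∀ k, i k = j k := by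
  have key : ∀ n, piP p (fun k => i (n + k)) = piP p (fun k => j (n + k)) := by
    intro n
    induction n with
    | zero => simpa using h
    | succ n ih =>
      have hvi : Valid (fun k => i (n + k)) := fun k => hi _
      have hvj : Valid (fun k => j (n + k)) := fun k => hj _
      have hd : i (n + 0) = j (n + 0) := digit0_eq hp hpsum hvi hvj ih
      have r1 := piP_rec hp hpsum hvi
      have r2 := piP_rec hp hpsum hvj
      rw [ih, r2] at r1
      have hppos := (hp (j (n + 0)) (hvj 0)).1
      have : piP p (fun k => i (n + (k + 1))) = piP p (fun k => j (n + (k + 1))) := by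
        rw [hd] at r1
        field_simp at r1
        exact mul_left_cancel₀ (ne_of_gt hppos) (add_left_cancel r1.symm)
      have e1 : (fun k => i (n + (k + 1))) = fun k => i (n + 1 + k) := by
        funext k; congr 1; omega
      have e2 : (fun k => j (n + (k + 1))) = fun k => j (n + 1 + k) := by
        funext k; congr 1; omega
      rwa [e1, e2] at this
  intro k
  have := digit0_eq hp hpsum (fun m => hi (k + m)) (fun m => hj (k + m)) (key k)
  simpa using this

end Aux14

namespace Aux14

lemma two_zpow_le_halfpow {z : ℤ} {k : ℕ} (h : z ≤ -(k : ℤ)) :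
    (2 : ℝ) ^ z ≤ (1 / 2 : ℝ) ^ k := by
  have h1 : (2 : ℝ) ^ z ≤ (2 : ℝ) ^ (-(k : ℤ)) :=
    zpow_le_zpow_right₀ one_le_two h
  have h2 : (2 : ℝ) ^ (-(k : ℤ)) = (1 / 2 : ℝ) ^ k := by
    rw [zpow_neg, ← zpow_natCast]
    simp [one_div, inv_pow]
  linarith

lemma sum_digits_ge {i : ℕ → ℕ} (hi : Valid i) (n : ℕ) :
    (n : ℤ) ≤ ∑ m ∈ Finset.range n, (i m : ℤ) := by
  calc (n : ℤ) = ∑ m ∈ Finset.range n, (1 : ℤ) := by simp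
    _ ≤ _ := Finset.sum_le_sum fun m _ => by exact_mod_cast hi m

lemma Mt_abs_le {i : ℕ → ℕ} (hi : Valid i) (k : ℕ) :
    |(-1 : ℝ) ^ k * (2 : ℝ) ^ ((1 : ℤ) - ∑ m ∈ Finset.range (k + 1), (i m : ℤ))|
      ≤ (1 / 2 : ℝ) ^ k := by
  have hz : (0 : ℝ) < (2 : ℝ) ^ ((1 : ℤ) - ∑ m ∈ Finset.range (k + 1), (i m : ℤ)) :=
    zpow_pos two_pos _
  rw [abs_mul, abs_pow, abs_neg, abs_one, one_pow, one_mul, abs_of_pos hz]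
  apply two_zpow_le_halfpow
  have := sum_digits_ge hi (k + 1)
  push_cast at this ⊢
  linarith

lemma Mt_summable {i : ℕ → ℕ} (hi : Valid i) :
    Summable (fun k : ℕ => (-1 : ℝ) ^ k *
      (2 : ℝ) ^ ((1 : ℤ) - ∑ m ∈ Finset.range (k + 1), (i m : ℤ))) := by
  apply Summable.of_abs
  apply Summable.of_nonneg_of_le (fun k => abs_nonneg _) (Mt_abs_le hi)
  exact summable_geometric_of_lt_one (by norm_num) (by norm_num)

lemma Mseq_abs_le {i : ℕ → ℕ} (hi : Valid i) : |Mseq i| ≤ 2 := by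
  unfold Mseq
  have habs : Summable (fun k : ℕ => |(-1 : ℝ) ^ k *
      (2 : ℝ) ^ ((1 : ℤ) - ∑ m ∈ Finset.range (k + 1), (i m : ℤ))|) := by
    apply Summable.of_nonneg_of_le (fun k => abs_nonneg _) (Mt_abs_le hi)
    exact summable_geometric_of_lt_one (by norm_num) (by norm_num)
  calc |∑' k : ℕ, (-1 : ℝ) ^ k *
        (2 : ℝ) ^ ((1 : ℤ) - ∑ m ∈ Finset.range (k + 1), (i m : ℤ))|
      ≤ ∑' k : ℕ, |(-1 : ℝ) ^ k *
        (2 : ℝ) ^ ((1 : ℤ) - ∑ m ∈ Finset.range (k + 1), (i m : ℤ))| := by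
        have hn : Summable (fun k : ℕ => ‖(-1 : ℝ) ^ k *
            (2 : ℝ) ^ ((1 : ℤ) - ∑ m ∈ Finset.range (k + 1), (i m : ℤ))‖) := by
          simp only [Real.norm_eq_abs]; exact habs
        have hb := norm_tsum_le_tsum_norm hn
        simp only [Real.norm_eq_abs] at hb
        exact hb
    _ ≤ ∑' k : ℕ, (1 / 2 : ℝ) ^ k :=
        Summable.tsum_le_tsum (Mt_abs_le hi) habs
          (summable_geometric_of_lt_one (by norm_num) (by norm_num))
    _ = 2 := tsum_geometric_two

lemma Mseq_rec {i : ℕ → ℕ} (hi : Valid i) :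
    Mseq i = (2 : ℝ) ^ ((1 : ℤ) - (i 0 : ℤ)) -
      (2 : ℝ) ^ (-(i 0 : ℤ)) * Mseq (fun k => i (k + 1)) := by
  have hshift : Valid (fun k => i (k + 1)) := fun k => hi (k + 1)
  set Mt : ℕ → ℝ := fun k => (-1 : ℝ) ^ k *
    (2 : ℝ) ^ ((1 : ℤ) - ∑ m ∈ Finset.range (k + 1), (i m : ℤ)) with hMt
  have hsum : Summable Mt := Mt_summable hi
  have h0 : Mseq i = Mt 0 + ∑' k, Mt (k + 1) := Summable.tsum_eq_zero_add hsum
  have hMt0 : Mt 0 = (2 : ℝ) ^ ((1 : ℤ) - (i 0 : ℤ)) := by simp [hMt]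
  have hstep : ∀ k, Mt (k + 1) = (-(2 : ℝ) ^ (-(i 0 : ℤ))) *
      ((-1 : ℝ) ^ k * (2 : ℝ) ^ ((1 : ℤ) - ∑ m ∈ Finset.range (k + 1), (i (m + 1) : ℤ))) := by
    intro k
    have hS : ∑ m ∈ Finset.range (k + 2), (i m : ℤ)
        = (∑ m ∈ Finset.range (k + 1), (i (m + 1) : ℤ)) + (i 0 : ℤ) :=
      Finset.sum_range_succ' _ _
    simp only [hMt]
    rw [hS]
    have h3 : (1 : ℤ) - ((∑ m ∈ Finset.range (k + 1), (i (m + 1) : ℤ)) + (i 0 : ℤ))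
        = (-(i 0 : ℤ)) + ((1 : ℤ) - ∑ m ∈ Finset.range (k + 1), (i (m + 1) : ℤ)) := by ring
    rw [h3, zpow_add₀ (two_ne_zero)]
    ring
  have h1 : (∑' k, Mt (k + 1)) = (-(2 : ℝ) ^ (-(i 0 : ℤ))) * Mseq (fun k => i (k + 1)) := by
    rw [show Mseq (fun k => i (k + 1)) = ∑' k : ℕ, (-1 : ℝ) ^ k *
      (2 : ℝ) ^ ((1 : ℤ) - ∑ m ∈ Finset.range (k + 1), (i (m + 1) : ℤ)) from rfl,
      ← tsum_mul_left]
    exact tsum_congr hstep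
  rw [h0, hMt0, h1]
  ring

lemma Mseq_half_hasSum {i : ℕ → ℕ} (hi : Valid i) :
    HasSum (fun k : ℕ => (-1 : ℝ) ^ k *
      (2 : ℝ) ^ (-(∑ m ∈ Finset.range (k + 1), (i m : ℤ)))) (Mseq i / 2) := by
  have h := (Mt_summable hi).hasSum.div_const 2
  have heq : (fun k : ℕ => (-1 : ℝ) ^ k *
      (2 : ℝ) ^ ((1 : ℤ) - ∑ m ∈ Finset.range (k + 1), (i m : ℤ)) / 2)
    = fun k : ℕ => (-1 : ℝ) ^ k *
      (2 : ℝ) ^ (-(∑ m ∈ Finset.range (k + 1), (i m : ℤ))) := by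
    funext k
    rw [sub_eq_add_neg, zpow_add₀ (two_ne_zero : (2:ℝ) ≠ 0), zpow_one]
    ring
  rw [heq] at h
  exact h

end Aux14

namespace Aux14

lemma sigma_iter {p : ℕ → ℝ} {σ : ℝ → ℝ}
    (hσ : ∀ i : ℕ → ℕ, (∀ k, 1 ≤ i k) → σ (piP p i) = piP p (fun k => i (k + 1)))
    {i : ℕ → ℕ} (hi : Valid i) :
    ∀ m, σ^[m] (piP p i) = piP p (fun k => i (m + k)) := by
  intro m
  induction m with
  | zero =>
    simp only [Function.iterate_zero, id_eq]
    congr 1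
    funext k
    simp
  | succ m ih =>
    rw [Function.iterate_succ_apply', ih, hσ _ (fun k => hi _)]
    congr 1
    funext k
    congr 1
    omega

lemma mem_Ico (hp : HP p) (hpsum : ∑' j : ℕ, p (j + 1) = 1) {i : ℕ → ℕ} (hi : Valid i) :
    piP p i ∈ Set.Ico (0 : ℝ) 1 :=
  ⟨piP_nonneg hp hpsum hi, piP_lt_one hp hpsum hi⟩

-- the key half-recursion in the form used in the functional equation
lemma Mseq_half_rec {j : ℕ → ℕ} (hj : Valid j) :
    Mseq j / 2 = (2 : ℝ) ^ (-(j 0 : ℤ)) * (1 - Mseq (fun k => j (k + 1)) / 2) := by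
  have h := Mseq_rec hj
  have h2 : (2 : ℝ) ^ ((1 : ℤ) - (j 0 : ℤ)) = 2 * (2 : ℝ) ^ (-(j 0 : ℤ)) := by
    rw [sub_eq_add_neg, zpow_add₀ (two_ne_zero : (2:ℝ) ≠ 0), zpow_one]
  rw [h, h2]
  ring

end Aux14


open Aux14

/-- The system `h(σ^{n−1}(x)) = 2^{−i_n}(1 − h(σ^n(x)))` has a unique solution in the
class of bounded functions on `[0,1)`, namely `h(x) = M_π(x)/2`, i.e. the function whose
value at `x = π_P(i_1, i_2, …)` is `∑_{k≥1} (−1)^{k−1} 2^{−(i_1+⋯+i_k)} = Mseq(i)/2`. -/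
theorem stmt14 (p : ℕ → ℝ) (hp : ∀ j, 1 ≤ j → 0 < p j ∧ p j < 1)
    (hpsum : ∑' j : ℕ, p (j + 1) = 1)
    (σ : ℝ → ℝ)
    (hσ : ∀ i : ℕ → ℕ, (∀ k, 1 ≤ i k) → σ (piP p i) = piP p (fun k => i (k + 1))) :
    (∃ h : ℝ → ℝ,
      (∃ C : ℝ, ∀ x ∈ Set.Ico (0 : ℝ) 1, |h x| ≤ C) ∧
      (∀ i : ℕ → ℕ, (∀ k, 1 ≤ i k) → ∀ n : ℕ, 1 ≤ n →
        h (σ^[n - 1] (piP p i)) =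
          (2 : ℝ) ^ (-(i (n - 1) : ℤ)) * (1 - h (σ^[n] (piP p i)))) ∧
      (∀ i : ℕ → ℕ, (∀ k, 1 ≤ i k) → h (piP p i) = Mseq i / 2)) ∧
    (∀ h : ℝ → ℝ,
      (∃ C : ℝ, ∀ x ∈ Set.Ico (0 : ℝ) 1, |h x| ≤ C) →
      (∀ i : ℕ → ℕ, (∀ k, 1 ≤ i k) → ∀ n : ℕ, 1 ≤ n →
        h (σ^[n - 1] (piP p i)) =
          (2 : ℝ) ^ (-(i (n - 1) : ℤ)) * (1 - h (σ^[n] (piP p i)))) →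
      ∀ i : ℕ → ℕ, (∀ k, 1 ≤ i k) → h (piP p i) = Mseq i / 2) := by
  classical
  constructor
  · -- existence
    set H : ℝ → ℝ := fun x =>
      if hx : ∃ i : ℕ → ℕ, Valid i ∧ piP p i = x then Mseq hx.choose / 2 else 0 with hH
    have Heq : ∀ i : ℕ → ℕ, Valid i → H (piP p i) = Mseq i / 2 := by
      intro i hi
      have hx : ∃ j : ℕ → ℕ, Valid j ∧ piP p j = piP p i := ⟨i, hi, rfl⟩
      simp only [hH, dif_pos hx]
      have hc := hx.choose_spec
      have : hx.choose = i := by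
        funext k
        exact piP_inj hp hpsum hc.1 hi hc.2 k
      rw [this]
    refine ⟨H, ⟨1, ?_⟩, ?_, fun i hi => Heq i hi⟩
    · intro x _
      by_cases hx : ∃ i : ℕ → ℕ, Valid i ∧ piP p i = x
      · simp only [hH, dif_pos hx]
        have := Mseq_abs_le hx.choose_spec.1
        rw [abs_div]
        simp only [abs_two]
        linarith
      · simp [hH, dif_neg hx]
    · intro i hi n hn
      obtain ⟨m, rfl⟩ : ∃ m, n = m + 1 := ⟨n - 1, by omega⟩
      simp only [Nat.add_sub_cancel]
      have h1 := sigma_iter hσ hi m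
      have h2 := sigma_iter hσ hi (m + 1)
      rw [h1, h2]
      set j : ℕ → ℕ := fun k => i (m + k) with hj
      have hjv : Valid j := fun k => hi _
      have hjs : Valid (fun k => j (k + 1)) := fun k => hi _
      have e2 : (fun k => i (m + 1 + k)) = fun k => j (k + 1) := by
        funext k; simp only [hj]; congr 1; omega
      rw [e2, Heq j hjv, Heq _ hjs]
      have hj0 : j 0 = i m := by simp [hj]
      rw [← hj0]
      exact Mseq_half_rec hjv
  · -- uniqueness
    rintro h ⟨C, hC⟩ heq i hi
    set S : ℕ → ℤ := fun n => ∑ m ∈ Finset.range n, (i m : ℤ) with hS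
    set a : ℕ → ℝ := fun m => h (piP p (fun k => i (m + k))) with ha
    have hrec : ∀ m, a m = (2 : ℝ) ^ (-(i m : ℤ)) * (1 - a (m + 1)) := by
      intro m
      have := heq i hi (m + 1) (by omega)
      simp only [Nat.add_sub_cancel] at this
      rw [sigma_iter hσ hi m, sigma_iter hσ hi (m + 1)] at this
      exact this
    have key : ∀ n, a 0 = (∑ k ∈ Finset.range n, (-1 : ℝ) ^ k * (2 : ℝ) ^ (-(S (k + 1))))
        + (-1 : ℝ) ^ n * (2 : ℝ) ^ (-(S n)) * a n := by
      intro n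
      induction n with
      | zero => simp [hS]
      | succ n ih =>
        rw [ih, Finset.sum_range_succ, hrec n]
        have hSn : S (n + 1) = S n + (i n : ℤ) := Finset.sum_range_succ _ _
        rw [hSn, neg_add, zpow_add₀ (two_ne_zero : (2:ℝ) ≠ 0)]
        ring
    have hCnonneg : 0 ≤ C := le_trans (abs_nonneg _) (hC 0 (by norm_num))
    have haC : ∀ n, |a n| ≤ C := by
      intro n
      exact hC _ (mem_Ico hp hpsum (fun k => hi (n + k)))
    have hbound : ∀ n, |(-1 : ℝ) ^ n * (2 : ℝ) ^ (-(S n)) * a n| ≤ C * (1 / 2 : ℝ) ^ n := by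
      intro n
      rw [abs_mul, abs_mul, abs_pow, abs_neg, abs_one, one_pow, one_mul]
      have h1 : |(2 : ℝ) ^ (-(S n))| ≤ (1 / 2 : ℝ) ^ n := by
        rw [abs_of_pos (zpow_pos two_pos _)]
        apply two_zpow_le_halfpow
        have := sum_digits_ge hi n
        simp only [hS]
        omega
      calc |(2 : ℝ) ^ (-(S n))| * |a n| ≤ (1 / 2 : ℝ) ^ n * C :=
            mul_le_mul h1 (haC n) (abs_nonneg _) (by positivity)
        _ = C * (1 / 2 : ℝ) ^ n := by ring
    have herr : Filter.Tendsto (fun n => (-1 : ℝ) ^ n * (2 : ℝ) ^ (-(S n)) * a n)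
        Filter.atTop (nhds 0) := by
      have hgeo : Filter.Tendsto (fun n : ℕ => C * (1 / 2 : ℝ) ^ n) Filter.atTop (nhds 0) := by
        have := tendsto_pow_atTop_nhds_zero_of_lt_one (by norm_num : (0:ℝ) ≤ 1/2)
          (by norm_num : (1/2 : ℝ) < 1)
        simpa using this.const_mul C
      apply squeeze_zero_norm hbound hgeo
    have hpartial : Filter.Tendsto
        (fun n => ∑ k ∈ Finset.range n, (-1 : ℝ) ^ k * (2 : ℝ) ^ (-(S (k + 1))))
        Filter.atTop (nhds (a 0)) := by
      have : (fun n => ∑ k ∈ Finset.range n, (-1 : ℝ) ^ k * (2 : ℝ) ^ (-(S (k + 1))))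
          = fun n => a 0 - (-1 : ℝ) ^ n * (2 : ℝ) ^ (-(S n)) * a n := by
        funext n
        have := key n
        linarith
      rw [this]
      simpa using Filter.Tendsto.sub (tendsto_const_nhds (x := a 0)) herr
    have hM : Filter.Tendsto
        (fun n => ∑ k ∈ Finset.range n, (-1 : ℝ) ^ k * (2 : ℝ) ^ (-(S (k + 1))))
        Filter.atTop (nhds (Mseq i / 2)) := (Mseq_half_hasSum hi).tendsto_sum_nat
    have ha0 : a 0 = Mseq i / 2 := tendsto_nhds_unique hpartial hM
    have hfun : (fun k => i (0 + k)) = i := by funext k; simp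
    have e : a 0 = h (piP p i) := congrArg h (congrArg (piP p) hfun)
    exact e.symm.trans ha0
end
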